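/- (Clopper–Pearson coverage, lower bound): Let X ~ Bin(n, p) with p ∈ (0,1], and define p̲(X) = sup{ q ∈ [0,1] : P(Bin(n,q) ≥ X) ≤ α }, with p̲ = 0 when X = 0. Then P(p̲(X) > p) ≤ α. -/

import Mathlib

open MeasureTheory

/-- Upper tail of the binomial distribution: `P(Bin(n,q) ≥ k)`. -/
noncomputable def binTail (n k : ℕ) (q : ℝ) : ℝ :=
  ∑ j ∈ Finset.Icc k n, (n.choose j : ℝ) * q ^ j * (1 - q) ^ (n - j)

/-- Clopper–Pearson one-sided lower confidence bound for an observed count `x`. -/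
noncomputable def cpLower (n : ℕ) (α : ℝ) (x : ℕ) : ℝ :=
  if x = 0 then 0 else sSup {q ∈ Set.Icc (0:ℝ) 1 | binTail n x q ≤ α}

noncomputable def uAux (n j : ℕ) (q : ℝ) : ℝ :=
  (j : ℝ) * (n.choose j : ℝ) * q ^ (j - 1) * (1 - q) ^ (n - j)

lemma hasDerivAt_term (n j : ℕ) (hj1 : 1 ≤ j) (hjn : j ≤ n) (q : ℝ) :
    HasDerivAt (fun q : ℝ => (n.choose j : ℝ) * q ^ j * (1 - q) ^ (n - j))
      (uAux n j q - uAux n (j + 1) q) q := by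
  have h1 : HasDerivAt (fun q : ℝ => q ^ j) ((j : ℝ) * q ^ (j - 1)) q :=
    hasDerivAt_pow j q
  have h2 : HasDerivAt (fun q : ℝ => (1 - q) ^ (n - j))
      (((n - j : ℕ) : ℝ) * (1 - q) ^ (n - j - 1) * (-1)) q :=
    ((hasDerivAt_id q).const_sub 1).pow (n - j)
  have h := (h1.const_mul ((n.choose j : ℝ))).mul h2
  refine h.congr_deriv ?_; symm
  have hch : ((j : ℝ) + 1) * (n.choose (j + 1) : ℝ) = ((n : ℝ) - j) * (n.choose j : ℝ) := by
    have h := Nat.choose_succ_right_eq n j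
    have h2 : ((n.choose (j + 1) * (j + 1) : ℕ) : ℝ) = ((n.choose j * (n - j) : ℕ) : ℝ) := by
      exact_mod_cast h
    push_cast [Nat.cast_sub hjn] at h2
    linarith
  simp only [uAux]
  rw [show n - (j + 1) = n - j - 1 from by omega, show (j + 1) - 1 = j from rfl,
    Nat.cast_sub hjn]
  push_cast
  linear_combination (-(q ^ j * (1 - q) ^ (n - j - 1))) * hch

lemma telescope_Icc (f : ℕ → ℝ) (x : ℕ) : ∀ m, x ≤ m →
    ∑ j ∈ Finset.Icc x m, (f j - f (j + 1)) = f x - f (m + 1) := by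
  intro m
  induction m with
  | zero => intro h; interval_cases x; simp
  | succ m ih =>
    intro h
    rcases Nat.lt_or_ge x (m + 1) with h' | h'
    · rw [Finset.sum_Icc_succ_top (by omega), ih (by omega)]; ring
    · have : x = m + 1 := by omega
      subst this; simp

lemma hasDerivAt_binTail (n x : ℕ) (hx : 1 ≤ x) (hxn : x ≤ n) (q : ℝ) :
    HasDerivAt (fun q => binTail n x q) (uAux n x q) q := by
  have h : HasDerivAt (fun q => binTail n x q)
      (∑ j ∈ Finset.Icc x n, (uAux n j q - uAux n (j + 1) q)) q := by
    apply HasDerivAt.fun_sum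
    intro j hj
    simp only [Finset.mem_Icc] at hj
    exact hasDerivAt_term n j (by omega) hj.2 q
  rw [telescope_Icc _ _ _ hxn] at h
  have hz : uAux n (n + 1) q = 0 := by
    simp [uAux, Nat.choose_eq_zero_of_lt (Nat.lt_succ_self n)]
  rw [hz, sub_zero] at h
  exact h

lemma binTail_monotoneOn (n x : ℕ) (hx : 1 ≤ x) (hxn : x ≤ n) :
    MonotoneOn (binTail n x) (Set.Icc (0:ℝ) 1) := by
  apply monotoneOn_of_deriv_nonneg (convex_Icc 0 1)
  · exact Continuous.continuousOn (by
      unfold binTail; continuity)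
  · intro q hq
    exact (hasDerivAt_binTail n x hx hxn q).differentiableAt.differentiableWithinAt
  · intro q hq
    rw [interior_Icc] at hq
    rw [(hasDerivAt_binTail n x hx hxn q).deriv]
    unfold uAux
    have h1 : (0:ℝ) ≤ q := le_of_lt hq.1
    have h2 : (0:ℝ) ≤ 1 - q := by linarith [hq.2]
    positivity

lemma key (n : ℕ) (p α : ℝ) (hp : p ∈ Set.Ioc (0:ℝ) 1) (x : ℕ)
    (h : p < cpLower n α x) : 1 ≤ x ∧ binTail n x p ≤ α := by
  have hx : x ≠ 0 := by
    intro hx0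
    rw [cpLower, if_pos hx0] at h
    linarith [hp.1]
  refine ⟨Nat.one_le_iff_ne_zero.mpr hx, ?_⟩
  rw [cpLower, if_neg hx] at h
  set S := {q ∈ Set.Icc (0:ℝ) 1 | binTail n x q ≤ α} with hS
  have hSne : S.Nonempty := by
    rcases Set.eq_empty_or_nonempty S with he | hne
    · rw [he, Real.sSup_empty] at h; linarith [hp.1]
    · exact hne
  obtain ⟨q, hqS, hpq⟩ := exists_lt_of_lt_csSup hSne h
  obtain ⟨hq01, hqα⟩ := hqS
  rcases Nat.lt_or_ge n x with hnx | hxn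
  · have : binTail n x p = 0 := by
      unfold binTail
      rw [Finset.Icc_eq_empty (by omega), Finset.sum_empty]
    rw [this]
    have : binTail n x q = 0 := by
      unfold binTail
      rw [Finset.Icc_eq_empty (by omega), Finset.sum_empty]
    linarith
  · calc binTail n x p ≤ binTail n x q :=
          binTail_monotoneOn n x (Nat.one_le_iff_ne_zero.mpr hx) hxn
            ⟨le_of_lt hp.1, hp.2⟩ hq01 (le_of_lt hpq)
      _ ≤ α := hqα

theorem stmt10 {Ω : Type*} [MeasurableSpace Ω] (P : Measure Ω) [IsProbabilityMeasure P]
    (n : ℕ) (hn : 1 ≤ n) (p : ℝ) (hp : p ∈ Set.Ioc (0:ℝ) 1)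
    (α : ℝ) (hα : α ∈ Set.Ioo (0:ℝ) 1) (X : Ω → ℕ)
    (hX : ∀ k : ℕ, P {ω | X ω = k} =
      ENNReal.ofReal ((n.choose k : ℝ) * p ^ k * (1 - p) ^ (n - k))) :
    P {ω | p < cpLower n α (X ω)} ≤ ENNReal.ofReal α := by
  classical
  set f : ℕ → ℝ := fun k => (n.choose k : ℝ) * p ^ k * (1 - p) ^ (n - k) with hf
  have hfnn : ∀ k, 0 ≤ f k := by
    intro k
    have h1 : (0:ℝ) ≤ p := le_of_lt hp.1
    have h2 : (0:ℝ) ≤ 1 - p := by linarith [hp.2]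
    positivity
  have hQtop : 1 ≤ n + 1 ∧ binTail n (n + 1) p ≤ α := by
    refine ⟨by omega, ?_⟩
    unfold binTail
    rw [Finset.Icc_eq_empty (by omega), Finset.sum_empty]
    linarith [hα.1]
  have hex : ∃ k, 1 ≤ k ∧ binTail n k p ≤ α := ⟨n + 1, hQtop⟩
  set k0 := Nat.find hex with hk0def
  have hk0 := Nat.find_spec hex
  have hk0n : k0 ≤ n + 1 := Nat.find_min' hex hQtop
  have hsub : {ω | p < cpLower n α (X ω)} ⊆ ⋃ j : ℕ, {ω | X ω = k0 + j} := by
    intro ω hω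
    obtain ⟨h1, h2⟩ := key n p α hp (X ω) hω
    have hle : k0 ≤ X ω := Nat.find_min' hex ⟨h1, h2⟩
    exact Set.mem_iUnion.mpr ⟨X ω - k0, by simp only [Set.mem_setOf_eq]; omega⟩
  calc P {ω | p < cpLower n α (X ω)}
      ≤ ∑' j : ℕ, P {ω | X ω = k0 + j} :=
        (measure_mono hsub).trans (measure_iUnion_le _)
    _ = ∑' j : ℕ, ENNReal.ofReal (f (k0 + j)) := by
        congr 1; funext j; exact hX (k0 + j)
    _ = ∑ j ∈ Finset.range (n + 1 - k0), ENNReal.ofReal (f (k0 + j)) := by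
        apply tsum_eq_sum
        intro j hj
        rw [Finset.mem_range, not_lt] at hj
        have : n < k0 + j := by omega
        simp [hf, Nat.choose_eq_zero_of_lt this]
    _ = ENNReal.ofReal (∑ j ∈ Finset.range (n + 1 - k0), f (k0 + j)) :=
        (ENNReal.ofReal_sum_of_nonneg (fun j _ => hfnn (k0 + j))).symm
    _ = ENNReal.ofReal (binTail n k0 p) := by
        congr 1
        rw [binTail, ← Finset.Ico_add_one_right_eq_Icc, Finset.sum_Ico_eq_sum_range]
    _ ≤ ENNReal.ofReal α := ENNReal.ofReal_le_ofReal hk0.2
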